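/- For each i ∈ {0,...,κ-1} there exists j ∈ {0,...,κ-1} such that the interval [A_i, A_{i+1}) is contained in the interval [min_{k ≤ j} A_{⟨k⟩}, min_{k < j} A_{⟨k⟩}). -/
import Mathlib


open scoped Classical

/-- `𝒜` is a family of conditional aggregation operators (FCA) with respect to the
collection `𝓔`: every operator is nonnegative, monotone in the coordinates of the
conditioning set, vanishes on the indicator of the complement, and `𝒜(·|∅) = 0`. -/
def IsFCA (n : ℕ) (𝓔 : Finset (Finset (Fin n)))
    (𝒜 : Finset (Fin n) → (Fin n → ℝ) → ℝ) : Prop :=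
  (∀ E ∈ 𝓔, ∀ x : Fin n → ℝ, 0 ≤ 𝒜 E x) ∧
  (∀ E ∈ 𝓔, E ≠ ∅ → ∀ x y : Fin n → ℝ, (∀ i ∈ E, x i ≤ y i) → 𝒜 E x ≤ 𝒜 E y) ∧
  (∀ E ∈ 𝓔, E ≠ ∅ → 𝒜 E (fun i => if i ∈ E then 0 else 1) = 0) ∧
  (∀ x : Fin n → ℝ, 𝒜 ∅ x = 0)

/-- `μ` is a monotone measure on the complements of the sets of `𝓔`:
`μ ∅ = 0`, nonnegative, and monotone. -/
def IsMonMeasure (n : ℕ) (𝓔 : Finset (Finset (Fin n)))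
    (μ : Finset (Fin n) → ℝ) : Prop :=
  μ ∅ = 0 ∧ (∀ E ∈ 𝓔, 0 ≤ μ Eᶜ) ∧
  (∀ E ∈ 𝓔, ∀ F ∈ 𝓔, Eᶜ ⊆ Fᶜ → μ Eᶜ ≤ μ Fᶜ)

/-- The generalized survival function
`μ_𝒜(x, α) = min { μ(Eᶜ) : 𝒜(x|E) ≤ α, E ∈ 𝓔 }`. -/
noncomputable def gsf {n : ℕ} (𝓔 : Finset (Finset (Fin n)))
    (𝒜 : Finset (Fin n) → (Fin n → ℝ) → ℝ)
    (μ : Finset (Fin n) → ℝ) (x : Fin n → ℝ) (α : ℝ) : ℝ :=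
  sInf {m : ℝ | ∃ E ∈ 𝓔, 𝒜 E x ≤ α ∧ m = μ Eᶜ}

/-- Proposition (porovnanie): for each `i` there is `j` such that
`[A_i, A_{i+1}) ⊆ [min_{k ≤ j} A_⟨k⟩, min_{k < j} A_⟨k⟩)`
(with `A_κ = +∞` and the minimum over the empty set equal to `+∞`). -/
theorem stmt6 {n κ : ℕ} (𝓔 : Finset (Finset (Fin n)))
    (𝒜 : Finset (Fin n) → (Fin n → ℝ) → ℝ) (μ : Finset (Fin n) → ℝ)
    (x : Fin n → ℝ)
    (hempty : ∅ ∈ 𝓔) (hU : (Finset.univ : Finset (Fin n)) ∈ 𝓔)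
    (hA : IsFCA n 𝓔 𝒜) (hμ : IsMonMeasure n 𝓔 μ) (hx : ∀ i, 0 ≤ x i)
    (hκ : 𝓔.card = κ)
    (Estar : Fin κ → Finset (Fin n))
    (hmem : ∀ i, Estar i ∈ 𝓔) (hinj : Function.Injective Estar)
    (hAmono : ∀ i j : Fin κ, i ≤ j → 𝒜 (Estar i) x ≤ 𝒜 (Estar j) x)
    (Fstar : Fin κ → Finset (Fin n))
    (hFmem : ∀ j, (Fstar j)ᶜ ∈ 𝓔) (hFinj : Function.Injective Fstar)
    (hμmono : ∀ i j : Fin κ, i ≤ j → μ (Fstar i) ≤ μ (Fstar j))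
    (i : Fin κ) :
    ∃ j : Fin κ, ∀ α : ℝ,
      (𝒜 (Estar i) x ≤ α ∧ ∀ h : (i : ℕ) + 1 < κ, α < 𝒜 (Estar ⟨(i : ℕ) + 1, h⟩) x) →
      (sInf {m : ℝ | ∃ k : Fin κ, k ≤ j ∧ m = 𝒜 (Fstar k)ᶜ x} ≤ α ∧
        ∀ k : Fin κ, k < j → α < 𝒜 (Fstar k)ᶜ x) := by
  classical
  have hinjF : Function.Injective (fun k : Fin κ => (Fstar k)ᶜ) := by
    intro a b h
    exact hFinj (compl_injective h)
  have hsurjF : ∀ E ∈ 𝓔, ∃ k : Fin κ, (Fstar k)ᶜ = E := by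
    intro E hE
    have himg : (Finset.univ.image fun k : Fin κ => (Fstar k)ᶜ) = 𝓔 := by
      apply Finset.eq_of_subset_of_card_le
      · intro F hF
        simp only [Finset.mem_image, Finset.mem_univ, true_and] at hF
        obtain ⟨k, hk⟩ := hF
        exact hk ▸ hFmem k
      · rw [hκ, Finset.card_image_of_injective _ hinjF, Finset.card_univ,
          Fintype.card_fin]
    rw [← himg] at hE
    simpa using hE
  have hsurjE : ∀ E ∈ 𝓔, ∃ m : Fin κ, Estar m = E := by
    intro E hE
    have himg : (Finset.univ.image Estar) = 𝓔 := by
      apply Finset.eq_of_subset_of_card_le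
      · intro F hF
        simp only [Finset.mem_image, Finset.mem_univ, true_and] at hF
        obtain ⟨k, hk⟩ := hF
        exact hk ▸ hmem k
      · rw [hκ, Finset.card_image_of_injective _ hinj, Finset.card_univ,
          Fintype.card_fin]
    rw [← himg] at hE
    simpa using hE
  obtain ⟨k0, hk0⟩ := hsurjF (Estar i) (hmem i)
  set S : Finset (Fin κ) :=
    Finset.univ.filter (fun k => 𝒜 (Fstar k)ᶜ x ≤ 𝒜 (Estar i) x) with hS
  have hSne : S.Nonempty := ⟨k0, by simp [hS, hk0]⟩
  refine ⟨S.min' hSne, ?_⟩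
  intro α ⟨hα1, hα2⟩
  set j := S.min' hSne with hj
  constructor
  · -- sInf ≤ α
    have hjS : j ∈ S := S.min'_mem hSne
    have hjle : 𝒜 (Fstar j)ᶜ x ≤ 𝒜 (Estar i) x := by
      simpa [hS] using hjS
    have hmemset : 𝒜 (Fstar j)ᶜ x ∈
        {m : ℝ | ∃ k : Fin κ, k ≤ j ∧ m = 𝒜 (Fstar k)ᶜ x} := ⟨j, le_refl j, rfl⟩
    have hbdd : BddBelow {m : ℝ | ∃ k : Fin κ, k ≤ j ∧ m = 𝒜 (Fstar k)ᶜ x} := by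
      refine ⟨0, ?_⟩
      rintro m ⟨k, _, rfl⟩
      exact hA.1 _ (hFmem k) x
    exact le_trans (csInf_le hbdd hmemset) (le_trans hjle hα1)
  · -- strict upper part
    intro k hk
    have hknot : k ∉ S := fun hkS => absurd (S.min'_le k hkS) (not_le.mpr hk)
    have hgt : 𝒜 (Estar i) x < 𝒜 (Fstar k)ᶜ x := by
      by_contra hle
      apply hknot
      simp only [hS, Finset.mem_filter, Finset.mem_univ, true_and]
      exact not_lt.mp hle
    obtain ⟨m, hm⟩ := hsurjE ((Fstar k)ᶜ) (hFmem k)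
    have him : i < m := by
      by_contra hle
      have := hAmono m i (le_of_not_gt hle)
      rw [hm] at this
      exact absurd this (not_le.mpr hgt)
    have hbound : (i : ℕ) + 1 < κ := lt_of_le_of_lt (Nat.succ_le_of_lt him) m.isLt
    have hle' : (⟨(i : ℕ) + 1, hbound⟩ : Fin κ) ≤ m := Nat.succ_le_of_lt him
    have := hAmono ⟨(i : ℕ) + 1, hbound⟩ m hle'
    rw [hm] at this
    exact lt_of_lt_of_le (hα2 hbound) this
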